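/- Let A be a reduced commutative ring and M a finitely generated A-module. If f = 0 is the only element f of A such that the localized module M[f⁻¹] is a finite free A[f⁻¹]-module, then 1 = 0 in A (i.e., A is the trivial ring). -/

import Mathlib

open Module Submodule

section Aux

variable {A : Type*} [CommRing A]

/-- The localization of a reduced ring at a minimal prime is a field. -/
lemma aux_isField_of_minimal [IsReduced A] {p : Ideal A} [p.IsPrime]
    (hp : p ∈ minimalPrimes A) : IsField (Localization.AtPrime p) := by
  refine ⟨exists_pair_ne _, mul_comm, ?_⟩
  intro a ha
  by_cases hu : IsUnit a
  · obtain ⟨u, rfl⟩ := hu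
    exact ⟨(u⁻¹ : _), u.mul_inv⟩
  · exfalso
    apply ha
    have : IsNilpotent a :=
      haveI := IsLocalization.subsingleton_primeSpectrum_of_mem_minimalPrimes p hp
        (Localization.AtPrime p)
      haveI : Ring.KrullDimLE 0 (Localization.AtPrime p) := inferInstanceAs
        (Order.KrullDimLE 0 (PrimeSpectrum (Localization.AtPrime p)))
      Ring.KrullDimLE.isNilpotent_iff_mem_nonunits.mpr hu
    exact this.eq_zero

/-- If `f • yⱼ ∈ span m` for a generating family `y`, then the images of the `m i`
span the localized module at any submonoid containing `f`. -/
lemma aux_span_top (M : Type*) [AddCommGroup M] [Module A M]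
    {n r : ℕ} (m : Fin n → M) (y : Fin r → M) (hy : span A (Set.range y) = ⊤)
    {f : A} (hf : ∀ j, f • y j ∈ span A (Set.range m))
    (S : Submonoid A) (hfS : f ∈ S) :
    span (Localization S) (LocalizedModule.mkLinearMap S M '' Set.range m) = ⊤ := by
  have hfx : ∀ x : M, f • x ∈ span A (Set.range m) := by
    intro x
    have hle : span A (Set.range y) ≤
        (span A (Set.range m)).comap (LinearMap.lsmul A M f) := by
      rw [span_le]
      rintro _ ⟨j, rfl⟩
      exact hf j
    exact hle (by rw [hy]; trivial)
  have hls := Submodule.localized'_span (Localization S) S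
    (LocalizedModule.mkLinearMap S M) (Set.range m)
  rw [← hls, eq_top_iff]
  rintro x -
  obtain ⟨⟨z, s⟩, rfl⟩ := IsLocalizedModule.mk'_surjective S
    (LocalizedModule.mkLinearMap S M) x
  rw [Submodule.mem_localized']
  refine ⟨f • z, hfx z, ⟨f, hfS⟩ * s, ?_⟩
  exact IsLocalizedModule.mk'_cancel_left _ _ _ _

end Aux

theorem generic_freeness_fg (A : Type*) [CommRing A] [IsReduced A]
    (M : Type*) [AddCommGroup M] [Module A M] [Module.Finite A M]
    (h : ∀ f : A,
      Module.Finite (Localization.Away f) (LocalizedModule (Submonoid.powers f) M) →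
      Module.Free (Localization.Away f) (LocalizedModule (Submonoid.powers f) M) →
      f = 0) :
    (1 : A) = 0 := by
  by_contra hA
  have hnt : Nontrivial A := nontrivial_of_ne 1 0 hA
  classical
  -- the set of ranks at minimal primes
  set T : Set ℕ := Module.rankAtStalk (R := A) M ''
    {x : PrimeSpectrum A | x.asIdeal ∈ minimalPrimes A} with hT
  obtain ⟨mx, hmx⟩ := Ideal.exists_maximal A
  obtain ⟨p₀, hp₀, -⟩ := Ideal.exists_minimalPrimes_le (I := (⊥ : Ideal A)) (J := mx) bot_le
  haveI : p₀.IsPrime := hp₀.1.1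
  have hTne : T.Nonempty := ⟨_, ⟨⟨p₀, inferInstance⟩, hp₀, rfl⟩⟩
  set n : ℕ := sInf T with hn
  obtain ⟨p, hpmin, hpn⟩ : ∃ x : PrimeSpectrum A,
      x.asIdeal ∈ minimalPrimes A ∧ Module.rankAtStalk M x = n := by
    obtain ⟨x, hx, hx'⟩ := Nat.sInf_mem hTne
    exact ⟨x, hx, hx'⟩
  -- the localization at p is a field
  set K := Localization.AtPrime p.asIdeal with hK
  letI : Field K := (aux_isField_of_minimal hpmin).toField
  set Mp := LocalizedModule p.asIdeal.primeCompl M with hMp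
  set g : M →ₗ[A] Mp := LocalizedModule.mkLinearMap p.asIdeal.primeCompl M with hg
  haveI : Module.Finite K Mp := Module.Finite.of_isLocalizedModule p.asIdeal.primeCompl g
  have hfr : Module.finrank K Mp = n := hpn
  let b : Basis (Fin n) K Mp := (Module.finBasis K Mp).reindex (finCongr hfr)
  -- choose representatives for the basis vectors
  obtain ⟨mm, ss, hmm⟩ : ∃ (mm : Fin n → M) (ss : Fin n → p.asIdeal.primeCompl),
      ∀ i, IsLocalizedModule.mk' g (mm i) (ss i) = b i := by
    have := fun i => IsLocalizedModule.mk'_surjective p.asIdeal.primeCompl g (b i)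
    choose zs hzs using this
    exact ⟨fun i => (zs i).1, fun i => (zs i).2, hzs⟩
  -- the images of the mm i span Mp over K
  have hspanp : span K (g '' Set.range mm) = ⊤ := by
    rw [eq_top_iff, ← b.span_eq]
    apply span_le.mpr
    rintro _ ⟨i, rfl⟩
    have hu : IsUnit (algebraMap A K (ss i : A)) := IsLocalization.map_units K (ss i)
    have h1 : (ss i : A) • b i = g (mm i) := by
      rw [← hmm i, ← Submonoid.smul_def]
      exact IsLocalizedModule.mk'_cancel' g (mm i) (ss i)
    have h2 : b i = ((hu.unit⁻¹ : _) : K) • g (mm i) := by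
      rw [← h1, ← algebraMap_smul K ((ss i : A)) (b i), smul_smul,
        IsUnit.val_inv_mul, one_smul]
    rw [h2]
    exact Submodule.smul_mem _ _ (subset_span ⟨mm i, ⟨i, rfl⟩, rfl⟩)
  -- find f ∉ p such that f • (generators of M) lie in span A (range mm)
  obtain ⟨r, y, hy⟩ := Module.Finite.exists_fin (R := A) (M := M)
  have hyj : ∀ j, ∃ s : p.asIdeal.primeCompl, (s : A) • y j ∈ span A (Set.range mm) := by
    intro j
    have hmem : g (y j) ∈ (span A (Set.range mm)).localized' K p.asIdeal.primeCompl g := by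
      rw [Submodule.localized'_span, hspanp]
      trivial
    rw [Submodule.mem_localized'] at hmem
    obtain ⟨z, hz, s, hzs⟩ := hmem
    have h3 : g z = g ((s : A) • y j) := by
      rw [map_smul, ← hzs, ← Submonoid.smul_def]
      exact (IsLocalizedModule.mk'_cancel' g z s).symm
    obtain ⟨c, hc⟩ := IsLocalizedModule.exists_of_eq (S := p.asIdeal.primeCompl) (f := g) h3
    refine ⟨c * s, ?_⟩
    rw [Submonoid.coe_mul, mul_smul, ← Submonoid.smul_def, ← hc]
    exact Submodule.smul_mem _ _ hz
  choose s hs using hyj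
  set sF : p.asIdeal.primeCompl := ∏ j, s j with hsF
  set f : A := (sF : A) with hfdef
  have hfy : ∀ j, f • y j ∈ span A (Set.range mm) := by
    intro j
    have he : sF = (∏ i ∈ Finset.univ.erase j, s i) * s j := by
      rw [Finset.prod_erase_mul _ _ (Finset.mem_univ j)]
    rw [hfdef, he, Submonoid.coe_mul, mul_smul]
    exact Submodule.smul_mem _ _ (hs j)
  -- the localization away from f
  set B := Localization.Away f with hB
  set Mf := LocalizedModule (Submonoid.powers f) M with hMf
  set gf : M →ₗ[A] Mf := LocalizedModule.mkLinearMap (Submonoid.powers f) M with hgf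
  have hspanf : span B (gf '' Set.range mm) = ⊤ :=
    aux_span_top M mm y hy hfy _ (Submonoid.mem_powers f)
  set ψ : (Fin n → B) →ₗ[B] Mf :=
    Fintype.linearCombination B (fun i => gf (mm i)) with hψ
  have hψsurj : LinearMap.range ψ = ⊤ := by
    rw [hψ, Fintype.range_linearCombination]
    rw [show Set.range (fun i => gf (mm i)) = gf '' Set.range mm by
      rw [← Set.range_comp]; rfl]
    exact hspanf
  by_cases hker : LinearMap.ker ψ = ⊥
  · -- ψ is an isomorphism, so Mf is finite free, contradiction with h
    have hbij : Function.Bijective ψ :=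
      ⟨LinearMap.ker_eq_bot.mp hker, LinearMap.range_eq_top.mp hψsurj⟩
    haveI : Module.Finite B Mf :=
      Module.Finite.of_isLocalizedModule (Submonoid.powers f) gf
    haveI : Module.Free B Mf := Module.Free.of_equiv (LinearEquiv.ofBijective ψ hbij)
    have hf0 : f = 0 := h f inferInstance inferInstance
    have hmemp : f ∈ p.asIdeal := by rw [hf0]; exact p.asIdeal.zero_mem
    exact sF.2 hmemp
  · -- there is a nonzero relation; derive a contradiction via ranks at minimal primes
    obtain ⟨k, hk, hk0⟩ := Submodule.exists_mem_ne_zero_of_ne_bot hker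
    obtain ⟨j, hkj⟩ := Function.ne_iff.mp hk0
    obtain ⟨bb, hbb⟩ := IsLocalization.exist_integer_multiples (Submonoid.powers f)
      Finset.univ k
    choose c hc using fun i => hbb i (Finset.mem_univ i)
    -- the relation element
    set z : M := ∑ i, c i • mm i with hzdef
    have hgfz : gf z = 0 := by
      have hco : gf z = algebraMap A B (bb : A) • (ψ k) := by
        rw [hzdef, map_sum, hψ, Fintype.linearCombination_apply, Finset.smul_sum]
        refine Finset.sum_congr rfl fun i _ => ?_
        rw [map_smul, ← algebraMap_smul B (c i) (gf (mm i)), hc i, Algebra.smul_def,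
          mul_smul]
      rw [hco, LinearMap.mem_ker.mp hk, smul_zero]
    obtain ⟨u, hu⟩ := (IsLocalizedModule.eq_zero_iff (Submonoid.powers f) gf).mp hgfz
    -- c j * f is nonzero
    have hcjf : c j * f ≠ 0 := by
      intro h0
      apply hkj
      have hmap0 : algebraMap A B (c j) = 0 := by
        rw [IsLocalization.map_eq_zero_iff (Submonoid.powers f)]
        exact ⟨⟨f, Submonoid.mem_powers f⟩, by
          show f * c j = 0
          rw [mul_comm]; exact h0⟩
      have : (algebraMap A B (bb : A)) * k j = 0 := by
        rw [← Algebra.smul_def, ← hc j, hmap0]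
      exact ((IsLocalization.map_units B bb).mul_right_eq_zero).mp this
    -- pick a minimal prime not containing c j * f
    obtain ⟨J, hJ, hJn⟩ : ∃ J : Ideal A, J.IsPrime ∧ c j * f ∉ J := by
      by_contra hcon
      push_neg at hcon
      exact hcjf (isNilpotent_iff_eq_zero.mp
        (nilpotent_iff_mem_prime.mpr fun J hJ => hcon J hJ))
    obtain ⟨p', hp'min, hp'le⟩ := Ideal.exists_minimalPrimes_le (I := (⊥ : Ideal A))
      (J := J) bot_le
    haveI : p'.IsPrime := hp'min.1.1
    have hfp' : f ∉ p' := fun hmem => hJn (hp'le (Ideal.mul_mem_left _ _ hmem))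
    have hcp' : c j ∉ p' := fun hmem => hJn (hp'le (Ideal.mul_mem_right _ _ hmem))
    set K' := Localization.AtPrime p' with hK'
    letI : Field K' := (aux_isField_of_minimal hp'min).toField
    set Mp' := LocalizedModule p'.primeCompl M with hMp'
    set g' : M →ₗ[A] Mp' := LocalizedModule.mkLinearMap p'.primeCompl M with hg'
    haveI : Module.Finite K' Mp' := Module.Finite.of_isLocalizedModule p'.primeCompl g'
    -- the relation holds in Mp'
    have hup' : (u : A) ∈ p'.primeCompl := by
      obtain ⟨t, ht⟩ := u.2
      rw [← ht]
      exact pow_mem hfp' t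
    have hrel : g' z = 0 := by
      refine (IsLocalizedModule.eq_zero_iff p'.primeCompl g').mpr ⟨⟨(u : A), hup'⟩, ?_⟩
      rw [Submonoid.smul_def]
      exact hu
    -- the images of mm span Mp'
    have hspan' : span K' (g' '' Set.range mm) = ⊤ :=
      aux_span_top M mm y hy hfy _ hfp'
    -- the image of mm j is redundant
    set w : Fin n → Mp' := fun i => g' (mm i) with hw
    set Sp : Submodule K' Mp' := span K' (Set.range fun i : {i : Fin n // i ≠ j} => w i)
      with hSp
    have hwj : ∀ i, w i ∈ Sp := by
      intro i
      by_cases hij : i = j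
      · subst hij
        have hrel' : ∑ i, algebraMap A K' (c i) • w i = 0 := by
          have : g' z = ∑ i, algebraMap A K' (c i) • w i := by
            rw [hzdef, map_sum]
            exact Finset.sum_congr rfl fun i _ => by
              rw [map_smul, algebraMap_smul]
          rw [← this, hrel]
        have hsplit : algebraMap A K' (c i) • w i
            = - ∑ l ∈ Finset.univ.erase i, algebraMap A K' (c l) • w l := by
          rw [eq_neg_iff_add_eq_zero, add_comm, Finset.sum_erase_add _ _ (Finset.mem_univ i)]
          simpa using hrel'
        have hmemSp : algebraMap A K' (c i) • w i ∈ Sp := by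
          rw [hsplit]
          refine neg_mem (Submodule.sum_mem _ fun l hl => ?_)
          refine Submodule.smul_mem _ _ (subset_span ?_)
          exact ⟨⟨l, (Finset.mem_erase.mp hl).1⟩, rfl⟩
        have hcu : IsUnit (algebraMap A K' (c i)) :=
          IsLocalization.map_units K' (⟨c i, hcp'⟩ : p'.primeCompl)
        have := Submodule.smul_mem Sp ((hcu.unit⁻¹ : _) : K') hmemSp
        rwa [smul_smul, IsUnit.val_inv_mul, one_smul] at this
      · exact subset_span ⟨⟨i, hij⟩, rfl⟩
    have hSptop : Sp = ⊤ := by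
      rw [eq_top_iff, ← hspan']
      apply span_le.mpr
      rintro _ ⟨_, ⟨i, rfl⟩, rfl⟩
      exact hwj i
    -- rank bounds
    have hle : Module.finrank K' Mp' ≤ n - 1 := by
      have hcard : Fintype.card {i : Fin n // i ≠ j} = n - 1 := by
        rw [Fintype.card_subtype_compl]
        simp
      calc Module.finrank K' Mp' ≤ Fintype.card {i : Fin n // i ≠ j} :=
            finrank_le_of_span_eq_top hSptop
        _ = n - 1 := hcard
    have hge : n ≤ Module.finrank K' Mp' :=
      Nat.sInf_le ⟨⟨p', inferInstance⟩, hp'min, rfl⟩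
    have hpos : 0 < n := j.pos
    omega
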